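/- arXiv:2110.07708 — 4 statements merged into one kernel-verified Lean document; each statement's English description precedes it below -/
import Mathlib

section
/- Let A be a unital C*-algebra, φ a state on A, and u ∈ A a unitary element. Define the state ψ on A by ψ(x) = φ(u* x u). If there exists a sequence (a_k) in A with 0 ≤ a_k ≤ 1 for every k such that lim_k ψ(a_k) = 0 and lim_k φ(1 − a_k) = 0, then φ(u) = 0. -/
open scoped ComplexOrder
open ComplexStarModule

section Aux

variable {A : Type*} [NormedRing A] [StarRing A] [CStarRing A]
    [NormedAlgebra ℂ A] [CompleteSpace A] [StarModule ℂ A]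
    [PartialOrder A] [StarOrderedRing A]

lemma phi_selfAdjoint_conj (φ : A →ₗ[ℂ] ℂ) (hφpos : ∀ a : A, 0 ≤ a → 0 ≤ φ a)
    {h : A} (hh : IsSelfAdjoint h) : (starRingEnd ℂ) (φ h) = φ h := by
  letI : CStarAlgebra A := {}
  have h1 : 0 ≤ φ h⁺ := hφpos _ (CFC.posPart_nonneg h)
  have h2 : 0 ≤ φ h⁻ := hφpos _ (CFC.negPart_nonneg h)
  have hd := CFC.posPart_sub_negPart h hh
  have him : (φ h).im = 0 := by
    rw [← hd, map_sub]
    have i1 : (φ h⁺).im = 0 := ((Complex.nonneg_iff.mp h1).2).symm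
    have i2 : (φ h⁻).im = 0 := ((Complex.nonneg_iff.mp h2).2).symm
    simp [Complex.sub_im, i1, i2]
  exact Complex.conj_eq_iff_im.mpr him

lemma phi_star (φ : A →ₗ[ℂ] ℂ) (hφpos : ∀ a : A, 0 ≤ a → 0 ≤ φ a)
    (a : A) : φ (star a) = (starRingEnd ℂ) (φ a) := by
  have hre : IsSelfAdjoint ((ℜ a : A)) := (ℜ a).2
  have him : IsSelfAdjoint ((ℑ a : A)) := (ℑ a).2
  have hdecomp : (ℜ a : A) + Complex.I • (ℑ a : A) = a :=
    realPart_add_I_smul_imaginaryPart a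
  have hstar : star a = (ℜ a : A) - Complex.I • (ℑ a : A) := by
    conv_lhs => rw [← hdecomp]
    rw [star_add, star_smul, hre.star_eq, him.star_eq]
    simp [sub_eq_add_neg, Complex.conj_I, neg_smul]
  have r1 := phi_selfAdjoint_conj φ hφpos hre
  have r2 := phi_selfAdjoint_conj φ hφpos him
  rw [hstar]
  conv_rhs => rw [← hdecomp]
  rw [map_sub, map_smul, map_add, map_smul, map_add]
  simp only [smul_eq_mul, map_mul, r1, r2, Complex.conj_I]
  ring

/-- The semi-inner-product core coming from a positive functional. -/
noncomputable def stateCore (φ : A →ₗ[ℂ] ℂ) (hφpos : ∀ a : A, 0 ≤ a → 0 ≤ φ a) :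
    PreInnerProductSpace.Core ℂ A where
  inner x y := φ (star x * y)
  conj_inner_symm x y := by
    show (starRingEnd ℂ) (φ (star y * x)) = φ (star x * y)
    rw [← phi_star φ hφpos]
    congr 1
    simp [star_mul]
  re_inner_nonneg x := by
    have := hφpos _ (star_mul_self_nonneg x)
    exact (Complex.nonneg_iff.mp this).1
  add_left x y z := by
    show φ (star (x + y) * z) = φ (star x * z) + φ (star y * z)
    rw [star_add, add_mul, map_add]
  smul_left x y r := by
    show φ (star (r • x) * y) = (starRingEnd ℂ) r * φ (star x * y)
    rw [star_smul, smul_mul_assoc, map_smul]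
    simp [smul_eq_mul]

lemma state_cauchy_schwarz (φ : A →ₗ[ℂ] ℂ) (hφpos : ∀ a : A, 0 ≤ a → 0 ≤ φ a)
    (x y : A) : ‖φ (star x * y)‖ ^ 2 ≤ (φ (star x * x)).re * (φ (star y * y)).re := by
  have key : ‖φ (star x * y)‖ * ‖φ (star y * x)‖ ≤ (φ (star x * x)).re * (φ (star y * y)).re :=
    @InnerProductSpace.Core.inner_mul_inner_self_le ℂ A _ _ _ (stateCore φ hφpos) x y
  have hsymm : φ (star y * x) = (starRingEnd ℂ) (φ (star x * y)) := by
    rw [← phi_star φ hφpos]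
    congr 1
    simp [star_mul]
  rw [hsymm, RCLike.norm_conj, ← sq] at key
  exact key

end Aux

/-- Let `A` be a unital C*-algebra, `φ` a state on `A`, and `u ∈ A` a
unitary element. Define the state `ψ` on `A` by `ψ x = φ (u* x u)`. If there exists a
sequence `(a k)` in `A` with `0 ≤ a k ≤ 1` for every `k` such that `ψ (a k) → 0` and
`φ (1 - a k) → 0`, then `φ u = 0`. -/
theorem stmt_0 {A : Type*} [NormedRing A] [StarRing A] [CStarRing A]
    [NormedAlgebra ℂ A] [CompleteSpace A] [StarModule ℂ A]
    [PartialOrder A] [StarOrderedRing A]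
    (φ : A →ₗ[ℂ] ℂ) (hφ1 : φ 1 = 1) (hφpos : ∀ a : A, 0 ≤ a → 0 ≤ φ a)
    (u : A) (hu : u ∈ unitary A)
    (ψ : A → ℂ) (hψ : ∀ x : A, ψ x = φ (star u * x * u))
    (a : ℕ → A) (ha0 : ∀ k, 0 ≤ a k) (ha1 : ∀ k, a k ≤ 1)
    (hlim1 : Filter.Tendsto (fun k => ψ (a k)) Filter.atTop (nhds 0))
    (hlim2 : Filter.Tendsto (fun k => φ (1 - a k)) Filter.atTop (nhds 0)) :
    φ u = 0 := by
  letI : CStarAlgebra A := {}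
  have huu : star u * u = 1 := (Unitary.mem_iff.mp hu).1
  -- pointwise bound
  have key : ∀ k, ‖φ u‖ ≤ Real.sqrt ((ψ (a k)).re) + Real.sqrt ((φ (1 - (a k))).re) := by
    intro k
    set b := a k with hb
    have hb0 : 0 ≤ b := ha0 k
    have hc0 : 0 ≤ (1 : A) - b := sub_nonneg.mpr (ha1 k)
    -- square roots
    set s := CFC.sqrt b with hs
    set t := CFC.sqrt (1 - b) with ht
    have hs0 : 0 ≤ s := CFC.sqrt_nonneg b
    have ht0 : 0 ≤ t := CFC.sqrt_nonneg (1 - b)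
    have hss : s * s = b := CFC.sqrt_mul_sqrt_self b hb0
    have htt : t * t = 1 - b := CFC.sqrt_mul_sqrt_self (1 - b) hc0
    have hsstar : star s = s := hs0.isSelfAdjoint.star_eq
    have htstar : star t = t := ht0.isSelfAdjoint.star_eq
    -- first Cauchy-Schwarz
    have cs1 := state_cauchy_schwarz φ hφpos s (s * u)
    rw [hsstar] at cs1
    have e1 : s * (s * u) = b * u := by rw [← mul_assoc, hss]
    have e2 : star (s * u) * (s * u) = star u * b * u := by
      rw [star_mul, hsstar]
      calc star u * s * (s * u) = star u * (s * s) * u := by noncomm_ring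
        _ = star u * b * u := by rw [hss]
    rw [e1, e2, hss] at cs1
    -- second Cauchy-Schwarz
    have cs2 := state_cauchy_schwarz φ hφpos t (t * u)
    rw [htstar] at cs2
    have f1 : t * (t * u) = (1 - b) * u := by rw [← mul_assoc, htt]
    have f2 : star (t * u) * (t * u) = star u * (1 - b) * u := by
      rw [star_mul, htstar]
      calc star u * t * (t * u) = star u * (t * t) * u := by noncomm_ring
        _ = star u * (1 - b) * u := by rw [htt]
    rw [f1, f2, htt] at cs2
    -- basic positivity facts
    have hψb : 0 ≤ φ (star u * b * u) := hφpos _ (star_left_conjugate_nonneg hb0 u)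
    have hψb' : 0 ≤ (φ (star u * b * u)).re := (Complex.nonneg_iff.mp hψb).1
    have hφc : 0 ≤ φ (1 - b) := hφpos _ hc0
    have hφc' : 0 ≤ (φ (1 - b)).re := (Complex.nonneg_iff.mp hφc).1
    have hφb : 0 ≤ φ b := hφpos _ hb0
    have hφb' : 0 ≤ (φ b).re := (Complex.nonneg_iff.mp hφb).1
    have hφb1 : (φ b).re ≤ 1 := by
      have h' : 0 ≤ φ (1 - b) := hφc
      rw [map_sub, hφ1] at h'
      have h'' := (Complex.nonneg_iff.mp h').1
      simp only [Complex.sub_re, Complex.one_re] at h''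
      linarith
    -- the conjugated value of 1 - b
    have hconj : star u * (1 - b) * u = 1 - star u * b * u := by
      rw [mul_sub, sub_mul, mul_one, huu]
    have hψc1 : (φ (star u * (1 - b) * u)).re ≤ 1 := by
      rw [hconj, map_sub, hφ1]
      simp only [Complex.sub_re, Complex.one_re]
      linarith
    -- bounds on the two pieces
    have bound1 : ‖φ (b * u)‖ ≤ Real.sqrt ((φ (star u * b * u)).re) := by
      rw [Real.le_sqrt (norm_nonneg _) hψb']
      calc ‖φ (b * u)‖ ^ 2 ≤ (φ b).re * (φ (star u * b * u)).re := cs1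
        _ ≤ 1 * (φ (star u * b * u)).re := mul_le_mul_of_nonneg_right hφb1 hψb'
        _ = (φ (star u * b * u)).re := one_mul _
    have bound2 : ‖φ ((1 - b) * u)‖ ≤ Real.sqrt ((φ (1 - b)).re) := by
      rw [Real.le_sqrt (norm_nonneg _) hφc']
      calc ‖φ ((1 - b) * u)‖ ^ 2
          ≤ (φ (1 - b)).re * (φ (star u * (1 - b) * u)).re := cs2
        _ ≤ (φ (1 - b)).re * 1 := mul_le_mul_of_nonneg_left hψc1 hφc'
        _ = (φ (1 - b)).re := mul_one _
    have hsplit : φ u = φ (b * u) + φ ((1 - b) * u) := by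
      rw [← map_add]
      congr 1
      noncomm_ring
    calc ‖φ u‖ = ‖φ (b * u) + φ ((1 - b) * u)‖ := by rw [hsplit]
      _ ≤ ‖φ (b * u)‖ + ‖φ ((1 - b) * u)‖ := norm_add_le _ _
      _ ≤ Real.sqrt ((φ (star u * b * u)).re) + Real.sqrt ((φ (1 - b)).re) :=
          add_le_add bound1 bound2
      _ = Real.sqrt ((ψ (a k)).re) + Real.sqrt ((φ (1 - (a k))).re) := by
          rw [hψ]
  -- the bound tends to 0
  have hre1 : Filter.Tendsto (fun k => (ψ (a k)).re) Filter.atTop (nhds 0) := by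
    have := (Complex.continuous_re.tendsto 0).comp hlim1
    simpa [Function.comp_def] using this
  have hre2 : Filter.Tendsto (fun k => (φ (1 - a k)).re) Filter.atTop (nhds 0) := by
    have := (Complex.continuous_re.tendsto 0).comp hlim2
    simpa [Function.comp_def] using this
  have hsq1 : Filter.Tendsto (fun k => Real.sqrt ((ψ (a k)).re)) Filter.atTop (nhds 0) := by
    have := (Real.continuous_sqrt.tendsto 0).comp hre1
    simpa [Function.comp_def] using this
  have hsq2 : Filter.Tendsto (fun k => Real.sqrt ((φ (1 - a k)).re)) Filter.atTop (nhds 0) := by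
    have := (Real.continuous_sqrt.tendsto 0).comp hre2
    simpa [Function.comp_def] using this
  have hsum : Filter.Tendsto
      (fun k => Real.sqrt ((ψ (a k)).re) + Real.sqrt ((φ (1 - a k)).re))
      Filter.atTop (nhds 0) := by
    simpa using hsq1.add hsq2
  have hle : ‖φ u‖ ≤ 0 := ge_of_tendsto' hsum key
  exact norm_eq_zero.mp (le_antisymm hle (norm_nonneg _))
end

section
/- Let Λ be a countable discrete group acting measurably on a standard Borel probability space (X, ν) by measure-preserving transformations. For γ ∈ Λ set Fix(γ) = {x ∈ X : γ·x = x}. Then the function φ : Λ → ℂ defined by φ(γ) = ν(Fix(γ)) is a character of Λ: φ(e) = 1, φ is positive definite, and φ(γ⁻¹ g γ) = φ(g) for all γ, g ∈ Λ. -/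
open scoped ComplexOrder
open MeasureTheory

/-- A function `φ : Λ → ℂ` on a group is positive definite if for every `n`, all
`g : Fin n → Λ` and `c : Fin n → ℂ`, the sum `∑ i j, c i * conj (c j) * φ ((g j)⁻¹ * g i)`
is a nonnegative real number. -/
def IsPosDefFn {Λ : Type*} [Group Λ] (φ : Λ → ℂ) : Prop :=
  ∀ (n : ℕ) (g : Fin n → Λ) (c : Fin n → ℂ),
    0 ≤ ∑ i, ∑ j, c i * (starRingEnd ℂ) (c j) * φ ((g j)⁻¹ * g i)


lemma posdef_aux {n : ℕ} {κ : Type*} [DecidableEq κ] (f : Fin n → κ) (c : Fin n → ℂ) :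
    0 ≤ ∑ i, ∑ j, c i * (starRingEnd ℂ) (c j) * (if f i = f j then (1:ℂ) else 0) := by
  classical
  set e : Fin n → κ → ℂ := fun i k => if f i = k then 1 else 0 with he
  have key : ∀ i j : Fin n, (if f i = f j then (1:ℂ) else 0)
      = ∑ k ∈ Finset.univ.image f, e i k * e j k := by
    intro i j
    by_cases h : f i = f j
    · rw [if_pos h]
      simp only [he, h]
      rw [Finset.sum_eq_single (f j)]
      · simp
      · intro k _ hk; simp [Ne.symm hk]
      · intro hk; exact absurd (Finset.mem_image_of_mem f (Finset.mem_univ j)) hk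
    · rw [if_neg h]
      symm
      apply Finset.sum_eq_zero
      intro k _
      simp only [he, mul_ite, mul_one, mul_zero]
      split_ifs with h1 h2 <;> simp_all
  have hconj : ∀ j k, (starRingEnd ℂ) (c j) * e j k = (starRingEnd ℂ) (c j * e j k) := by
    intro j k
    simp only [he, map_mul, apply_ite (starRingEnd ℂ)]
    norm_num
  calc (0:ℂ) ≤ ∑ k ∈ Finset.univ.image f,
      (∑ i, c i * e i k) * (starRingEnd ℂ) (∑ i, c i * e i k) := by
        apply Finset.sum_nonneg
        intro k _
        rw [Complex.mul_conj]
        exact_mod_cast Complex.normSq_nonneg _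
    _ = ∑ i, ∑ j, c i * (starRingEnd ℂ) (c j) * (if f i = f j then (1:ℂ) else 0) := by
        simp_rw [key, Finset.mul_sum, map_sum, Finset.sum_mul_sum, ← hconj]
        rw [Finset.sum_comm]
        congr 1; ext i
        rw [Finset.sum_comm]
        congr 1; ext j
        congr 1; ext k
        ring

lemma posdef_part {Λ : Type*} [Group Λ]
    {X : Type*} [MeasurableSpace X] [StandardBorelSpace X]
    (ν : Measure X) [IsProbabilityMeasure ν]
    [MulAction Λ X] (hmeas : ∀ γ : Λ, Measurable fun x : X => γ • x)
    (n : ℕ) (g : Fin n → Λ) (c : Fin n → ℂ) :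
    0 ≤ ∑ i, ∑ j, c i * (starRingEnd ℂ) (c j) *
      ((ν {x : X | ((g j)⁻¹ * g i) • x = x}).toReal : ℂ) := by
  classical
  letI := upgradeStandardBorel X
  set A : Fin n → Fin n → Set X := fun i j => {x : X | g i • x = g j • x} with hA
  have hms : ∀ i j, MeasurableSet (A i j) := fun i j =>
    StronglyMeasurable.measurableSet_eq_fun
      (hmeas (g i)).stronglyMeasurable (hmeas (g j)).stronglyMeasurable
  have hsets : ∀ i j : Fin n, {x : X | ((g j)⁻¹ * g i) • x = x} = A i j := by
    intro i j
    ext x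
    simp only [hA, Set.mem_setOf_eq, mul_smul]
    rw [inv_smul_eq_iff]
  set F : X → ℂ := fun x =>
    ∑ i, ∑ j, Set.indicator (A i j) (fun _ => c i * (starRingEnd ℂ) (c j)) x with hF
  have hint : ∀ i j : Fin n,
      Integrable (Set.indicator (A i j) (fun _ => c i * (starRingEnd ℂ) (c j))) ν :=
    fun i j => (integrable_const _).indicator (hms i j)
  have hFint : Integrable F ν := by
    apply integrable_finset_sum
    intro i _
    exact integrable_finset_sum _ (fun j _ => hint i j)
  have hsum : ∑ i, ∑ j, c i * (starRingEnd ℂ) (c j) *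
      ((ν {x : X | ((g j)⁻¹ * g i) • x = x}).toReal : ℂ) = ∫ x, F x ∂ν := by
    rw [hF]
    rw [integral_finset_sum _ (fun i _ => integrable_finset_sum _ (fun j _ => hint i j))]
    congr 1; ext i
    rw [integral_finset_sum _ (fun j _ => hint i j)]
    congr 1; ext j
    rw [integral_indicator_const _ (hms i j), hsets i j]
    rw [Complex.real_smul]
    rw [measureReal_def]
    ring
  have hFnn : ∀ x, 0 ≤ F x := by
    intro x
    have := posdef_aux (fun i => g i • x) c
    rw [hF]
    convert this using 2 with i
    congr 1; ext j
    rw [Set.indicator_apply]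
    simp only [hA, Set.mem_setOf_eq]
    split_ifs <;> ring
  have him : F = fun x => (((F x).re : ℝ) : ℂ) := by
    funext x
    have h := hFnn x
    rw [Complex.le_def] at h
    exact Complex.ext rfl h.2.symm
  rw [hsum]
  have heq : ∫ x, F x ∂ν = ((∫ x, (F x).re ∂ν : ℝ) : ℂ) := by
    conv_lhs => rw [him]
    exact integral_ofReal
  rw [heq, Complex.zero_le_real]
  apply integral_nonneg
  intro x
  exact ((Complex.le_def).mp (hFnn x)).1

/-- Let `Λ` be a countable discrete group acting measurably on a standard
Borel probability space `(X, ν)` by measure-preserving transformations. Then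
`φ : γ ↦ ν (Fix γ)` is a character of `Λ`: `φ 1 = 1`, `φ` is positive definite, and
`φ (γ⁻¹ * g * γ) = φ g` for all `γ, g`. -/
theorem stmt_2 {Λ : Type*} [Group Λ] [Countable Λ]
    {X : Type*} [MeasurableSpace X] [StandardBorelSpace X]
    (ν : Measure X) [IsProbabilityMeasure ν]
    [MulAction Λ X] (hmeas : ∀ γ : Λ, Measurable fun x : X => γ • x)
    (hpres : ∀ γ : Λ, MeasurePreserving (fun x : X => γ • x) ν ν) :
    (fun γ : Λ => ((ν {x : X | γ • x = x}).toReal : ℂ)) 1 = 1 ∧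
    IsPosDefFn (fun γ : Λ => ((ν {x : X | γ • x = x}).toReal : ℂ)) ∧
    (∀ γ g : Λ, ((ν {x : X | (γ⁻¹ * g * γ) • x = x}).toReal : ℂ) =
      ((ν {x : X | g • x = x}).toReal : ℂ)) := by
  classical
  letI := upgradeStandardBorel X
  refine ⟨?_, ?_, ?_⟩
  · simp only
    have h1 : {x : X | (1 : Λ) • x = x} = Set.univ := by ext x; simp
    rw [h1, measure_univ]
    norm_num
  · intro n g c
    exact posdef_part ν hmeas n g c
  · intro γ g
    have hms : MeasurableSet {x : X | g • x = x} := by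
      have := StronglyMeasurable.measurableSet_eq_fun
        (hmeas g).stronglyMeasurable ((hmeas 1).stronglyMeasurable)
      simpa using this
    have hset : {x : X | (γ⁻¹ * g * γ) • x = x}
        = (fun x : X => γ • x) ⁻¹' {y : X | g • y = y} := by
      ext x
      simp only [Set.mem_setOf_eq, Set.mem_preimage, mul_smul]
      rw [inv_smul_eq_iff, eq_comm]
    rw [hset, (hpres γ).measure_preimage hms.nullMeasurableSet]
end

section
/- Let Λ be a countable discrete group acting on a complex Banach space E by linear isometries, with the dual action on the continuous dual E* given by (γ·c)(x) = c(γ⁻¹·x). Let μ : Λ → [0,1] satisfy Σ_{γ∈Λ} μ(γ) = 1, and let 𝒞 ⊆ E* be a nonempty Λ-invariant convex subset that is compact in the weak-* topology. Then there exists a μ-stationary point c ∈ 𝒞, that is, for every x ∈ E the series Σ_{γ∈Λ} μ(γ)·(γ·c)(x) converges absolutely and equals c(x). -/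
open Filter

/-- A finite sub-convex combination plus remainder mass on a base point stays in a
convex set. -/
lemma convex_sum_add_remainder {V : Type*} [AddCommGroup V] [Module ℝ V] {s : Set V}
    (hs : Convex ℝ s) {ι : Type*} (F : Finset ι) (w : ι → ℝ) (hw : ∀ i, 0 ≤ w i)
    (hw1 : ∑ i ∈ F, w i ≤ 1) (z : ι → V) (hz : ∀ i ∈ F, z i ∈ s) {c : V} (hc : c ∈ s) :
    (∑ i ∈ F, w i • z i) + (1 - ∑ i ∈ F, w i) • c ∈ s := by
  classical
  set emb : ι ↪ Option ι := ⟨some, Option.some_injective ι⟩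
  have hnone : (none : Option ι) ∉ F.map emb := by simp [emb]
  have key := hs.sum_mem (t := insert none (F.map emb))
      (w := fun o => o.elim (1 - ∑ i ∈ F, w i) w)
      (z := fun o => o.elim c z) ?_ ?_ ?_
  · rw [Finset.sum_insert hnone, Finset.sum_map] at key
    simp only [emb, Function.Embedding.coeFn_mk, Option.elim] at key
    convert key using 1
    abel
  · rintro (_ | i) _
    · simpa using sub_nonneg.mpr hw1
    · exact hw i
  · rw [Finset.sum_insert hnone, Finset.sum_map]
    simp [emb]
  · rintro (_ | i) hi
    · exact hc
    · refine hz i ?_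
      simp only [Finset.mem_insert, Finset.mem_map, emb, Function.Embedding.coeFn_mk] at hi
      rcases hi with h | ⟨j, hj, hji⟩
      · exact absurd h (by simp)
      · obtain rfl : j = i := Option.some_injective ι hji
        exact hj

/-- Let `Λ` be a countable discrete group acting on a complex Banach
space `E` by linear isometries (a homomorphism `ρ : Λ →* (E ≃ₗᵢ[ℂ] E)`), with dual action
on `E*` given by `(γ · c) x = c (ρ γ⁻¹ x)`.  Let `μ : Λ → [0,1]` with `∑ γ, μ γ = 1`, and
let `𝒞 ⊆ E*` be a nonempty `Λ`-invariant convex subset that is compact in the weak-*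
topology (equivalently, its image in `E → ℂ` under the coercion is compact in the
topology of pointwise convergence).  Then there exists a `μ`-stationary point `c ∈ 𝒞`:
for every `x ∈ E` the series `∑ γ, μ γ * (γ · c) x` converges absolutely and equals
`c x`. -/
theorem stmt_7 {Λ : Type*} [Group Λ] [Countable Λ]
    {E : Type*} [NormedAddCommGroup E] [NormedSpace ℂ E] [CompleteSpace E]
    [TopologicalSpace.SeparableSpace E]
    (ρ : Λ →* (E ≃ₗᵢ[ℂ] E))
    (μ : Λ → ℝ) (hμ0 : ∀ γ, 0 ≤ μ γ) (hμ1 : ∀ γ, μ γ ≤ 1) (hμsum : HasSum μ 1)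
    (𝒞 : Set (E →L[ℂ] ℂ)) (h𝒞ne : 𝒞.Nonempty) (h𝒞conv : Convex ℝ 𝒞)
    (h𝒞inv : ∀ γ : Λ, ∀ c ∈ 𝒞,
      c.comp (ρ γ⁻¹).toLinearIsometry.toContinuousLinearMap ∈ 𝒞)
    (h𝒞cpt : IsCompact ((fun c : E →L[ℂ] ℂ => (c : E → ℂ)) '' 𝒞)) :
    ∃ c ∈ 𝒞, ∀ x : E,
      Summable (fun γ : Λ => μ γ * ‖c (ρ γ⁻¹ x)‖) ∧
      HasSum (fun γ : Λ => (μ γ : ℂ) * c (ρ γ⁻¹ x)) (c x) := by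
  classical
  -- the compact set of coercions
  set K : Set (E → ℂ) := (fun c : E →L[ℂ] ℂ => (c : E → ℂ)) '' 𝒞 with hK
  -- uniform norm bound
  obtain ⟨M, hM0, hM⟩ : ∃ M, 0 ≤ M ∧ ∀ c ∈ 𝒞, ‖c‖ ≤ M := by
    have hpt : ∀ x : E, ∃ C, ∀ c : 𝒞, ‖(c : E →L[ℂ] ℂ) x‖ ≤ C := by
      intro x
      have hcx : IsCompact ((fun f : E → ℂ => f x) '' K) := h𝒞cpt.image (continuous_apply x)
      obtain ⟨C, hC⟩ := hcx.isBounded.exists_norm_le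
      exact ⟨C, fun c => hC _ ⟨(c : E → ℂ), ⟨(c : E →L[ℂ] ℂ), c.2, rfl⟩, rfl⟩⟩
    obtain ⟨C, hC⟩ := banach_steinhaus (g := fun c : 𝒞 => (c : E →L[ℂ] ℂ)) hpt
    exact ⟨max C 0, le_max_right _ _, fun c hc => le_trans (hC ⟨c, hc⟩) (le_max_left _ _)⟩
  have hKb : ∀ f ∈ K, ∀ x : E, ‖f x‖ ≤ M * ‖x‖ := by
    rintro f ⟨c, hc, rfl⟩ x
    exact le_trans (c.le_opNorm x) (by gcongr; exact hM c hc)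
  -- summability
  have hsummR : ∀ f ∈ K, ∀ x : E, Summable (fun γ : Λ => μ γ * ‖f (ρ γ⁻¹ x)‖) := by
    intro f hf x
    refine Summable.of_nonneg_of_le (fun γ => mul_nonneg (hμ0 γ) (norm_nonneg _)) (fun γ => ?_)
      (hμsum.summable.mul_right (M * ‖x‖))
    have h1 : ‖f (ρ γ⁻¹ x)‖ ≤ M * ‖ρ γ⁻¹ x‖ := hKb f hf _
    rw [(ρ γ⁻¹).norm_map] at h1
    exact mul_le_mul_of_nonneg_left h1 (hμ0 γ)
  have hsummC : ∀ f ∈ K, ∀ x : E, Summable (fun γ : Λ => (μ γ : ℂ) * f (ρ γ⁻¹ x)) := by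
    intro f hf x
    refine Summable.of_norm ?_
    have : (fun γ : Λ => ‖(μ γ : ℂ) * f (ρ γ⁻¹ x)‖) = fun γ => μ γ * ‖f (ρ γ⁻¹ x)‖ := by
      funext γ
      rw [norm_mul, Complex.norm_real, Real.norm_of_nonneg (hμ0 γ)]
    rw [this]
    exact hsummR f hf x
  -- the Markov operator on functions
  set T : (E → ℂ) → (E → ℂ) := fun g x => ∑' γ : Λ, (μ γ : ℂ) * g (ρ γ⁻¹ x) with hT
  have hKcpt : IsCompact K := h𝒞cpt
  have hKclosed : IsClosed K := hKcpt.isClosed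
  -- T maps K into K
  have hTK : ∀ f ∈ K, T f ∈ K := by
    rintro f ⟨c, hc, rfl⟩
    set D : Finset Λ → (E →L[ℂ] ℂ) := fun F =>
      (∑ γ ∈ F, μ γ • c.comp (ρ γ⁻¹).toLinearIsometry.toContinuousLinearMap)
        + (1 - ∑ γ ∈ F, μ γ) • c with hD
    have hDmem : ∀ F : Finset Λ, D F ∈ 𝒞 := by
      intro F
      exact convex_sum_add_remainder h𝒞conv F μ hμ0
        (sum_le_hasSum F (fun i _ => hμ0 i) hμsum) _ (fun γ _ => h𝒞inv γ c hc) hc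
    have hDtend : Tendsto (fun F : Finset Λ => ((D F : E →L[ℂ] ℂ) : E → ℂ)) atTop
        (nhds (T (c : E → ℂ))) := by
      rw [tendsto_pi_nhds]
      intro x
      have hval : ∀ F : Finset Λ, (D F) x
          = (∑ γ ∈ F, (μ γ : ℂ) * c (ρ γ⁻¹ x)) + ((1 : ℂ) - (∑ γ ∈ F, μ γ : ℝ)) * c x := by
        intro F
        simp [hD, ContinuousLinearMap.sum_apply, Complex.real_smul]
      simp only [hval]
      have h1 : Tendsto (fun F : Finset Λ => ∑ γ ∈ F, (μ γ : ℂ) * c (ρ γ⁻¹ x)) atTop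
          (nhds (T (c : E → ℂ) x)) := (hsummC _ ⟨c, hc, rfl⟩ x).hasSum
      have h2 : Tendsto (fun F : Finset Λ => ((1 : ℂ) - (∑ γ ∈ F, μ γ : ℝ)) * c x) atTop
          (nhds 0) := by
        have h : Tendsto (fun F : Finset Λ => (∑ γ ∈ F, μ γ : ℝ)) atTop (nhds 1) := hμsum
        have hc' : Tendsto (fun F : Finset Λ => ((∑ γ ∈ F, μ γ : ℝ) : ℂ)) atTop
            (nhds ((1 : ℝ) : ℂ)) := (Complex.continuous_ofReal.tendsto 1).comp h
        have h3 : Tendsto (fun F : Finset Λ => ((1 : ℂ) - (∑ γ ∈ F, μ γ : ℝ)) * c x) atTop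
            (nhds (((1 : ℂ) - ((1 : ℝ) : ℂ)) * c x)) :=
          (tendsto_const_nhds.sub hc').mul tendsto_const_nhds
        simpa using h3
      simpa using h1.add h2
    exact hKclosed.mem_of_tendsto hDtend (Eventually.of_forall fun F => ⟨D F, hDmem F, rfl⟩)
  -- K is convex
  have hKconv : Convex ℝ K := by
    have : K = (⟨⟨fun c : E →L[ℂ] ℂ => (c : E → ℂ), fun a b => rfl⟩,
        fun r a => rfl⟩ : (E →L[ℂ] ℂ) →ₗ[ℝ] (E → ℂ)) '' 𝒞 := rfl
    rw [this]
    exact h𝒞conv.linear_image _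
  -- iterates and averages
  obtain ⟨c₀, hc₀⟩ := h𝒞ne
  set it : ℕ → (E → ℂ) := fun n => T^[n] (c₀ : E → ℂ) with hit
  have hitK : ∀ n, it n ∈ K := by
    intro n
    induction n with
    | zero => exact ⟨c₀, hc₀, rfl⟩
    | succ n ih =>
        show T^[n + 1] (c₀ : E → ℂ) ∈ K
        rw [Function.iterate_succ_apply']
        exact hTK _ ih
  set A : ℕ → (E → ℂ) := fun n => ((n : ℝ) + 1)⁻¹ • ∑ k ∈ Finset.range (n + 1), it k with hA
  have hAK : ∀ n, A n ∈ K := by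
    intro n
    rw [hA]
    simp only [Finset.smul_sum]
    refine hKconv.sum_mem (fun i _ => by positivity) ?_ (fun i _ => hitK i)
    rw [Finset.sum_const, Finset.card_range, nsmul_eq_mul]
    push_cast
    rw [mul_inv_cancel₀ (by positivity)]
  -- T is affine on averages: T (A n) = average of shifted iterates (pointwise)
  have hitsucc : ∀ k, it (k + 1) = T (it k) := by
    intro k
    show T^[k + 1] (c₀ : E → ℂ) = _
    rw [Function.iterate_succ_apply']
  have hTA : ∀ n x, T (A n) x
      = (((((n : ℝ) + 1)⁻¹ : ℝ)) : ℂ) * ∑ k ∈ Finset.range (n + 1), it (k + 1) x := by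
    intro n x
    set r : ℂ := ((((n : ℝ) + 1)⁻¹ : ℝ) : ℂ) with hr
    have hAx : ∀ y : E, A n y = r * ∑ k ∈ Finset.range (n + 1), it k y := by
      intro y
      rw [hA]
      simp [Complex.real_smul, hr]
    have h1 : T (A n) x
        = ∑' γ : Λ, r * ∑ k ∈ Finset.range (n + 1), (μ γ : ℂ) * it k (ρ γ⁻¹ x) := by
      rw [hT]
      refine tsum_congr fun γ => ?_
      rw [hAx]
      simp only [Finset.mul_sum]
      refine Finset.sum_congr rfl fun k _ => ?_
      ring
    rw [h1, tsum_mul_left, Summable.tsum_finsetSum (fun k _ => (hsummC _ (hitK k) x))]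
    congr 1
    refine Finset.sum_congr rfl fun k _ => ?_
    rw [hitsucc k]
  -- asymptotic fixed point property
  have hdiff : ∀ x : E, Tendsto (fun n => T (A n) x - A n x) atTop (nhds 0) := by
    intro x
    have hval : ∀ n, T (A n) x - A n x
        = (((((n : ℝ) + 1)⁻¹ : ℝ)) : ℂ) * (it (n + 1) x - it 0 x) := by
      intro n
      rw [hTA, hA]
      simp only [Pi.smul_apply, Finset.sum_apply, Complex.real_smul]
      rw [← mul_sub, ← Finset.sum_sub_distrib]
      congr 2
      exact Finset.sum_range_sub (fun k => it k x) (n + 1)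
    simp only [hval]
    refine squeeze_zero_norm (a := fun n : ℕ => ((n:ℝ)+1)⁻¹ * (2 * (M * ‖x‖))) (fun n => ?_) ?_
    · show ‖(((((n:ℝ)+1)⁻¹ : ℝ)) : ℂ) * (it (n+1) x - it 0 x)‖ ≤ ((n:ℝ)+1)⁻¹ * (2 * (M * ‖x‖))
      rw [norm_mul, Complex.norm_real, Real.norm_of_nonneg (by positivity)]
      gcongr
      calc ‖it (n+1) x - it 0 x‖ ≤ ‖it (n+1) x‖ + ‖it 0 x‖ := norm_sub_le _ _
        _ ≤ M * ‖x‖ + M * ‖x‖ := add_le_add (hKb _ (hitK _) x) (hKb _ (hitK _) x)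
        _ = 2 * (M * ‖x‖) := by ring
    · have := tendsto_one_div_add_atTop_nhds_zero_nat (𝕜 := ℝ)
      simpa [one_div] using this.mul_const (2 * (M * ‖x‖))
  -- cluster point
  have hle : map A atTop ≤ Filter.principal K :=
    Filter.le_principal_iff.mpr (Filter.mem_map.mpr (Eventually.of_forall hAK))
  obtain ⟨f, hfK, hcl⟩ := hKcpt.exists_clusterPt (f := map A atTop) hle
  -- continuity of g ↦ T g x on K
  have hTcont : ∀ x : E, ContinuousOn (fun g : E → ℂ => T g x) K := by
    intro x
    have hunif : TendstoUniformlyOn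
        (fun (F : Finset Λ) (g : E → ℂ) => ∑ γ ∈ F, (μ γ : ℂ) * g (ρ γ⁻¹ x))
        (fun g : E → ℂ => T g x) atTop K := by
      refine tendstoUniformlyOn_tsum (u := fun γ => μ γ * (M * ‖x‖))
        (hμsum.summable.mul_right _) ?_
      intro γ g hg
      rw [norm_mul, Complex.norm_real, Real.norm_of_nonneg (hμ0 γ)]
      have h1 : ‖g (ρ γ⁻¹ x)‖ ≤ M * ‖ρ γ⁻¹ x‖ := hKb g hg _
      rw [(ρ γ⁻¹).norm_map] at h1
      exact mul_le_mul_of_nonneg_left h1 (hμ0 γ)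
    refine hunif.continuousOn (Eventually.of_forall fun F => ?_).frequently
    exact (continuousOn_finset_sum F fun γ _ =>
      ((continuous_apply (ρ γ⁻¹ x)).continuousOn.const_smul ((μ γ : ℂ)))).congr
      (fun g _ => by simp [Finset.sum_apply, smul_eq_mul])
  -- f is a fixed point of T
  have hfix : ∀ x : E, T f x = f x := by
    intro x
    set G : Filter (E → ℂ) := map A atTop ⊓ nhds f with hG
    have hGne : G.NeBot := by
      rw [hG, inf_comm]
      exact hcl.neBot
    have hGK : G ≤ Filter.principal K := le_trans inf_le_left hle
    have hGf : G ≤ nhds f := inf_le_right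
    have hGnw : G ≤ nhdsWithin f K := le_inf hGf hGK
    set ψ : (E → ℂ) → ℂ := fun g => T g x - g x with hψ
    have hψc : ContinuousWithinAt ψ K f :=
      ((hTcont x).continuousWithinAt hfK).sub ((continuous_apply x).continuousWithinAt)
    have t1 : Tendsto ψ G (nhds (T f x - f x)) :=
      hψc.mono_left (le_trans hGnw le_rfl)
    have t2 : Tendsto ψ G (nhds 0) := by
      have : Tendsto ψ (map A atTop) (nhds 0) := by
        rw [tendsto_map'_iff]
        exact hdiff x
      exact this.mono_left inf_le_left
    exact sub_eq_zero.mp (tendsto_nhds_unique t1 t2)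
  obtain ⟨c, hc, rfl⟩ := hfK
  refine ⟨c, hc, fun x => ⟨hsummR _ ⟨c, hc, rfl⟩ x, ?_⟩⟩
  have hs := (hsummC _ ⟨c, hc, rfl⟩ x).hasSum
  rwa [show ∑' γ : Λ, (μ γ : ℂ) * c (ρ γ⁻¹ x) = c x from hfix x] at hs
end

section
/- Let H be a locally compact second countable topological group with a left Haar measure m, and let μ be a Borel probability measure on H that is absolutely continuous with respect to m. Let F : H → ℂ be a bounded Borel measurable function that is right μ-harmonic, i.e. F(g) = ∫_H F(gh) dμ(h) for every g ∈ H. Then F is continuous. -/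
open MeasureTheory

/-- Let `H` be a locally compact second countable topological group
with a left Haar measure `m`, and `μ` a Borel probability measure on `H` absolutely
continuous with respect to `m`.  Let `F : H → ℂ` be a bounded Borel measurable function
that is right `μ`-harmonic, i.e. `F g = ∫ F (g * h) dμ h` for every `g`.  Then `F` is
continuous. -/
theorem stmt_10 {H : Type*} [Group H] [TopologicalSpace H] [IsTopologicalGroup H]
    [LocallyCompactSpace H] [SecondCountableTopology H]
    [MeasurableSpace H] [BorelSpace H]
    (m : Measure H) [m.IsHaarMeasure]
    (μ : Measure H) [IsProbabilityMeasure μ] (hac : μ ≪ m)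
    (F : H → ℂ) (hF : Measurable F) (C : ℝ) (hFC : ∀ g, ‖F g‖ ≤ C)
    (hharm : ∀ g : H, F g = ∫ h, F (g * h) ∂μ) :
    Continuous F := by
  -- regularity instance for the Haar measure
  obtain ⟨K, hKc, hK1⟩ := exists_compact_mem_nhds (1 : H)
  haveI hreg : m.Regular :=
    Measure.regular_of_isMulLeftInvariant hKc ⟨1, mem_interior_iff_mem_nhds.2 hK1⟩
      hKc.measure_lt_top.ne
  haveI : Fact ((1 : ENNReal) ≤ 1) := ⟨le_rfl⟩
  haveI : Fact ((1 : ENNReal) ≠ ⊤) := ⟨ENNReal.one_ne_top⟩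
  have hC0 : 0 ≤ C := le_trans (norm_nonneg _) (hFC 1)
  -- the density of μ with respect to m, as a complex valued integrable function
  set φ : H → ℂ := fun h => ((μ.rnDeriv m h).toReal : ℂ) with hφ_def
  have hφ_int : Integrable φ m := (Measure.integrable_toReal_rnDeriv).ofReal
  -- key formula: F g = ∫ F y * φ (g⁻¹ * y) dm y
  have key : ∀ g : H, F g = ∫ y, F y * φ (g⁻¹ * y) ∂m := by
    intro g
    have h1 : F g = ∫ h, (μ.rnDeriv m h).toReal • F (g * h) ∂m := by
      rw [MeasureTheory.integral_rnDeriv_smul hac]; exact hharm g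
    have h2 : ∫ x, F (g * x) * φ (g⁻¹ * (g * x)) ∂m = ∫ y, F y * φ (g⁻¹ * y) ∂m :=
      (measurePreserving_mul_left m g).integral_comp
        (MeasurableEquiv.mulLeft g).measurableEmbedding (fun y => F y * φ (g⁻¹ * y))
    rw [h1, ← h2]
    congr 1 with x
    rw [inv_mul_cancel_left]
    simp [hφ_def, Complex.real_smul, mul_comm]
  -- the continuous linear functional u ↦ ∫ F * u on L¹
  set L : Lp ℂ 1 m → ℂ := fun u => ∫ y, F y * u y ∂m with hL_def
  have hint : ∀ u : Lp ℂ 1 m, Integrable (fun y => F y * u y) m := fun u =>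
    (L1.integrable_coeFn u).bdd_mul hF.aestronglyMeasurable (Filter.Eventually.of_forall hFC)
  have hLlip : LipschitzWith (Real.toNNReal C) L := by
    refine LipschitzWith.of_dist_le_mul fun u v => ?_
    rw [dist_eq_norm, dist_eq_norm, hL_def]
    have : ∫ y, F y * u y ∂m - ∫ y, F y * v y ∂m = ∫ y, F y * u y - F y * v y ∂m :=
      (integral_sub (hint u) (hint v)).symm
    rw [this]
    calc ‖∫ y, F y * u y - F y * v y ∂m‖ ≤ ∫ y, ‖F y * u y - F y * v y‖ ∂m :=
          norm_integral_le_integral_norm _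
      _ ≤ ∫ y, C * ‖u y - v y‖ ∂m := by
          refine integral_mono_of_nonneg (Filter.Eventually.of_forall fun y => norm_nonneg _)
            (((L1.integrable_coeFn u).sub (L1.integrable_coeFn v)).norm.const_mul C)
            (Filter.Eventually.of_forall fun y => ?_)
          simp only [← mul_sub, norm_mul]
          exact mul_le_mul_of_nonneg_right (hFC y) (norm_nonneg _)
      _ = C * ∫ y, ‖u y - v y‖ ∂m := integral_const_mul _ _
      _ = C * ‖u - v‖ := by
          rw [L1.norm_eq_integral_norm]
          congr 1
          refine integral_congr_ae ?_
          filter_upwards [Lp.coeFn_sub u v] with y hy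
          rw [hy, Pi.sub_apply]
      _ ≤ Real.toNNReal C * ‖u - v‖ := by
          gcongr
          exact Real.le_coe_toNNReal C
  -- the translated densities, as a continuous family in L¹
  set φL : Lp ℂ 1 m := (memLp_one_iff_integrable.2 hφ_int).toLp φ with hφL_def
  set G : H → Lp ℂ 1 m := fun g => (DomMulAct.mk g⁻¹ : Hᵈᵐᵃ) • φL with hG_def
  have hGcont : Continuous G := by
    have h1 : Continuous fun c : Hᵈᵐᵃ => c • φL := continuous_id.smul continuous_const
    exact h1.comp (DomMulAct.mkHomeomorph.continuous.comp continuous_inv)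
  -- F = L ∘ G
  have hFeq : F = L ∘ G := by
    funext g
    have hae : (G g : H → ℂ) =ᵐ[m] fun y => φ (g⁻¹ * y) := by
      refine (DomMulAct.smul_Lp_ae_eq _ _).trans ?_
      have : (φL : H → ℂ) =ᵐ[m] φ := MemLp.coeFn_toLp _
      have h2 := (measurePreserving_mul_left m g⁻¹).quasiMeasurePreserving.ae_eq_comp
        ((memLp_one_iff_integrable.2 hφ_int).coeFn_toLp)
      exact h2
    simp only [Function.comp_apply, hL_def]
    rw [key g]
    refine integral_congr_ae ?_
    filter_upwards [hae] with y hy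
    rw [hy]
  rw [hFeq]
  exact hLlip.continuous.comp hGcont
end
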